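/- Let X be a finite set with a metric taking a single nonzero value (so Iso(X) = Sym(X)). Fix a linear order < on X. For each partial bijection p of X, let φ(p) be the extension of p by the unique <-order-preserving bijection between X ∖ dom(p) and X ∖ rng(p). Then φ is a strongly coherent S-extension: each φ(p) is a permutation of X extending p, φ(p⁻¹) = φ(p)⁻¹, and whenever p∘q = r (with rng(q) = dom(p)), we have φ(p)∘φ(q) = φ(r). -/

import Mathlib

open Set

section Stmt17Aux

attribute [local instance] Fintype.ofFinite

variable {X : Type} [Finite X] [LinearOrder X]
set_option linter.unusedSectionVars false

open Classical in
lemma s17_card (p : PartialEquiv X X) :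
    Fintype.card ↥(p.sourceᶜ) = Fintype.card ↥(p.targetᶜ) := by
  classical
  have h1 : Fintype.card ↥p.source = Fintype.card ↥p.target :=
    Fintype.card_congr (Set.BijOn.equiv p p.bijOn)
  have h2 := Fintype.card_compl_set p.source
  have h3 := Fintype.card_compl_set p.target
  omega

open Classical in
noncomputable def s17Iso (p : PartialEquiv X X) : ↥(p.sourceᶜ) ≃o ↥(p.targetᶜ) :=
  (Fintype.orderIsoFinOfCardEq ↥(p.sourceᶜ) (s17_card p)).symm.trans
    (Fintype.orderIsoFinOfCardEq ↥(p.targetᶜ) rfl)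

open Classical in
noncomputable def s17 (p : PartialEquiv X X) : Equiv.Perm X :=
  (Equiv.Set.sumCompl p.source).symm.trans
    ((Equiv.sumCongr (Set.BijOn.equiv p p.bijOn) (s17Iso p).toEquiv).trans
      (Equiv.Set.sumCompl p.target))

lemma s17_apply_mem (p : PartialEquiv X X) {x : X} (hx : x ∈ p.source) :
    s17 p x = p x := by
  classical
  simp [s17, Equiv.Set.sumCompl_symm_apply_of_mem hx, Set.BijOn.equiv, Equiv.ofBijective]

lemma s17_apply_not_mem (p : PartialEquiv X X) {x : X} (hx : x ∉ p.source) :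
    s17 p x = ↑(s17Iso p ⟨x, hx⟩) := by
  classical
  simp [s17, Equiv.Set.sumCompl_symm_apply_of_notMem hx]

end Stmt17Aux

section Stmt17Aux2

attribute [local instance] Fintype.ofFinite

variable {X : Type} [Finite X] [LinearOrder X]
set_option linter.unusedSectionVars false

lemma s17_not_mem_target (p : PartialEquiv X X) {x : X} (hx : x ∉ p.source) :
    s17 p x ∉ p.target := by
  rw [s17_apply_not_mem p hx]
  exact (s17Iso p ⟨x, hx⟩).2

lemma s17_mono (p : PartialEquiv X X) {x y : X} (hx : x ∉ p.source) (hy : y ∉ p.source)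
    (hxy : x ≤ y) : s17 p x ≤ s17 p y := by
  rw [s17_apply_not_mem p hx, s17_apply_not_mem p hy]
  exact_mod_cast (s17Iso p).monotone (show (⟨x, hx⟩ : ↥(p.sourceᶜ)) ≤ ⟨y, hy⟩ from hxy)

lemma s17_symm_comp (p : PartialEquiv X X) (x : X) : s17 p.symm (s17 p x) = x := by
  by_cases hx : x ∈ p.source
  · rw [s17_apply_mem p hx, s17_apply_mem p.symm (by simpa using p.map_source hx)]
    exact p.left_inv hx
  · have hy : s17 p x ∉ p.symm.source := s17_not_mem_target p hx
    rw [s17_apply_not_mem p.symm hy]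
    have he : s17Iso p.symm = (s17Iso p).symm := Subsingleton.elim _ _
    rw [he]
    have : (⟨s17 p x, hy⟩ : ↥(p.targetᶜ)) = s17Iso p ⟨x, hx⟩ :=
      Subtype.ext (s17_apply_not_mem p hx)
    exact (congrArg (fun z => ((s17Iso p).symm z : X)) this).trans (by simp)

lemma s17_trans_source (p q : PartialEquiv X X) (h : q.target = p.source) :
    (q.trans p).source = q.source := by
  rw [PartialEquiv.trans_source, Set.inter_eq_left]
  exact fun x hx => h ▸ q.map_source hx

lemma s17_trans_target (p q : PartialEquiv X X) (h : q.target = p.source) :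
    (q.trans p).target = p.target := by
  rw [PartialEquiv.trans_target, Set.inter_eq_left]
  exact fun x hx => h.symm ▸ p.map_target hx

lemma s17_trans (p q : PartialEquiv X X) (h : q.target = p.source) :
    s17 (q.trans p) = s17 p * s17 q := by
  classical
  have hs := s17_trans_source p q h
  have ht := s17_trans_target p q h
  ext x
  rw [Equiv.Perm.mul_apply]
  by_cases hx : x ∈ q.source
  · rw [s17_apply_mem (q.trans p) (hs ▸ hx), s17_apply_mem q hx,
      s17_apply_mem p (h ▸ q.map_source hx)]
    rfl
  · -- build the composite order iso and use uniqueness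
    have hs' : ∀ a : X, a ∈ (q.trans p).source ↔ a ∈ q.source := fun a => by rw [hs]
    have ht' : ∀ a : X, a ∈ (q.trans p).target ↔ a ∈ p.target := fun a => by rw [ht]
    have notmem : ∀ z : ↥((q.trans p).sourceᶜ), s17 p (s17 q z) ∈ ((q.trans p).targetᶜ) := by
      intro z
      have hz : (z : X) ∉ q.source := fun hcon => z.2 ((hs' _).mpr hcon)
      have h1 : s17 q z ∉ p.source := h ▸ s17_not_mem_target q hz
      have h2 := s17_not_mem_target p h1
      exact fun hcon => h2 ((ht' _).mp hcon)
    set f : ↥((q.trans p).sourceᶜ) → ↥((q.trans p).targetᶜ) :=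
      fun z => ⟨s17 p (s17 q z), notmem z⟩ with hf
    have hinj : Function.Injective f := by
      intro a b hab
      apply Subtype.ext
      have hv := Subtype.ext_iff.mp hab
      exact (s17 q).injective ((s17 p).injective hv)
    have hmono : StrictMono f := by
      intro a b hab
      have ha : (a : X) ∉ q.source := fun hcon => a.2 ((hs' _).mpr hcon)
      have hb : (b : X) ∉ q.source := fun hcon => b.2 ((hs' _).mpr hcon)
      have h1 : s17 q a ≤ s17 q b := s17_mono q ha hb hab.le
      have h2 : s17 p (s17 q a) ≤ s17 p (s17 q b) :=
        s17_mono p (h ▸ s17_not_mem_target q ha) (h ▸ s17_not_mem_target q hb) h1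
      have hlt : s17 p (s17 q (a : X)) < s17 p (s17 q (b : X)) :=
        lt_of_le_of_ne h2 (fun hcon => hab.ne (hinj (Subtype.ext hcon)))
      exact Subtype.mk_lt_mk.mpr hlt
    have hsurj : Function.Surjective f := by
      have := (Fintype.bijective_iff_injective_and_card f).mpr
        ⟨hinj, s17_card (q.trans p)⟩
      exact this.surjective
    have key : StrictMono.orderIsoOfSurjective f hmono hsurj = s17Iso (q.trans p) :=
      Subsingleton.elim _ _
    have hxs : x ∉ (q.trans p).source := fun hcon => hx ((hs' _).mp hcon)
    rw [s17_apply_not_mem (q.trans p) hxs, ← key]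
    rfl

end Stmt17Aux2

/-- On a finite metric space `X` with a single nonzero distance value (so that
isometries are exactly permutations), the order-preserving extension of partial
bijections is a strongly coherent S-extension: each partial bijection `p` extends to a
permutation `φ p` (an isometry) which is order-preserving between the complements of
the domain and range, with `φ p.symm = (φ p)⁻¹` and `φ (p ∘ q) = φ p * φ q` whenever
`rng q = dom p`. -/
theorem stmt_17 (X : Type) [Finite X] [LinearOrder X] [MetricSpace X]
    (c : ℝ) (hc : 0 < c) (hX : ∀ x y : X, x ≠ y → dist x y = c) :
    ∃ φ : PartialEquiv X X → Equiv.Perm X,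
      (∀ p : PartialEquiv X X, Isometry (φ p)) ∧
      (∀ p : PartialEquiv X X, ∀ x ∈ p.source, φ p x = p x) ∧
      (∀ p : PartialEquiv X X, φ p.symm = (φ p)⁻¹) ∧
      (∀ p : PartialEquiv X X, ∀ x ∉ p.source, φ p x ∉ p.target) ∧
      (∀ p : PartialEquiv X X, ∀ x ∉ p.source, ∀ y ∉ p.source, x ≤ y → φ p x ≤ φ p y) ∧
      (∀ p q : PartialEquiv X X, q.target = p.source →
        φ (q.trans p) = φ p * φ q) := by
  refine ⟨s17, fun p => ?_, fun p x hx => s17_apply_mem p hx, fun p => ?_,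
    fun p x hx => s17_not_mem_target p hx, fun p x hx y hy => s17_mono p hx hy,
    fun p q h => s17_trans p q h⟩
  · apply Isometry.of_dist_eq
    intro x y
    rcases eq_or_ne x y with rfl | hne
    · simp
    · rw [hX _ _ hne, hX _ _ (fun hcon => hne ((s17 p).injective hcon))]
  · have : s17 p.symm * s17 p = 1 := Equiv.ext (s17_symm_comp p)
    exact eq_inv_of_mul_eq_one_left this
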